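/- Assume moreover 1 ≤ r ≤ n−1. Then the matrix 𝔅 is degenerate (det 𝔅 = 0) if and only if either γ = 0 or γ² = r + 1. -/

import Mathlib

/-- The Cartan matrix of `sl(n+1, ℂ)` in 1-based indices:
`2` on the diagonal, `-1` for `|i - j| = 1`, and `0` otherwise. -/
noncomputable def cartanEntry (i j : ℕ) : ℂ :=
  if i = j then 2 else if i + 1 = j ∨ j + 1 = i then -1 else 0

/-- The entries of the matrix `𝔅` (1-based indices):
`𝔅_{ij} = (A_n)_{ij} (γ² − δ_{i>r} δ_{j>r} (r+1) + (r/2) δ_{i,r+1} δ_{j,r+1})`. -/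
noncomputable def Bentry (r : ℕ) (γ : ℂ) (i j : ℕ) : ℂ :=
  cartanEntry i j *
    (γ ^ 2 - (if r < i then 1 else 0) * (if r < j then 1 else 0) * ((r : ℂ) + 1)
      + ((r : ℂ) / 2) * (if i = r + 1 then 1 else 0) * (if j = r + 1 then 1 else 0))

/-- The matrix `𝔅` as an `n × n` complex matrix. -/
noncomputable def Bmatrix (n r : ℕ) (γ : ℂ) : Matrix (Fin n) (Fin n) ℂ :=
  Matrix.of fun i j => Bentry r γ (i.1 + 1) (j.1 + 1)

/-! Auxiliary LU decomposition of `𝔅`. -/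

noncomputable def qval (r : ℕ) (γ : ℂ) (k : ℕ) : ℂ :=
  if k ≤ r then γ ^ 2 else γ ^ 2 - ((r : ℂ) + 1)

/-- Entries of the unit lower bidiagonal factor (1-based). -/
noncomputable def lent (I J : ℕ) : ℂ :=
  if I = J then 1 else if J + 1 = I then -(J : ℂ) / ((J : ℂ) + 1) else 0

/-- Entries of the upper bidiagonal factor (1-based). -/
noncomputable def uent (r : ℕ) (γ : ℂ) (I J : ℕ) : ℂ :=
  if I = J then qval r γ I * ((I : ℂ) + 1) / (I : ℂ)
  else if I + 1 = J then -qval r γ I else 0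

noncomputable def Lmat (n : ℕ) : Matrix (Fin n) (Fin n) ℂ :=
  Matrix.of fun i j => lent (i.1 + 1) (j.1 + 1)

noncomputable def Umat (n r : ℕ) (γ : ℂ) : Matrix (Fin n) (Fin n) ℂ :=
  Matrix.of fun i j => uent r γ (i.1 + 1) (j.1 + 1)

lemma key_identity (r : ℕ) (hr1 : 1 ≤ r) (γ : ℂ) (I J : ℕ) (hI : 1 ≤ I) (hJ : 1 ≤ J) :
    lent I J * (qval r γ J * ((J : ℂ) + 1) / (J : ℂ))
      + (if 2 ≤ J then lent I (J - 1) * (-qval r γ (J - 1)) else 0)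
      = Bentry r γ I J := by
  have hJ0 : (J : ℂ) ≠ 0 := Nat.cast_ne_zero.mpr (by omega)
  by_cases hd : I = J
  · subst hd
    by_cases hI1 : I = 1
    · subst hI1
      simp only [lent, uent, Bentry, cartanEntry, qval, if_true]
      rw [if_neg (by omega : ¬ 2 ≤ 1)]
      rw [if_pos hr1, if_neg (by omega : ¬ r < 1),
        if_neg (by omega : ¬ (1:ℕ) = r + 1)]
      push_cast
      ring
    · have h2I : 2 ≤ I := by omega
      have hI10 : (↑(I - 1) : ℂ) ≠ 0 := Nat.cast_ne_zero.mpr (by omega)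
      have hcast : (↑(I - 1) : ℂ) = (I : ℂ) - 1 := by
        rw [Nat.cast_sub (by omega), Nat.cast_one]
      have hJ1c : (I : ℂ) + 1 ≠ 0 := by
        have := Nat.cast_add_one_ne_zero (R := ℂ) I; push_cast at this ⊢; exact this
      simp only [lent, uent, Bentry, cartanEntry, qval, if_true]
      rw [if_pos h2I,
        if_neg (by omega : ¬ I = I - 1), if_pos (by omega : I - 1 + 1 = I)]
      rcases lt_trichotomy I (r + 1) with hir | hir | hir
      · -- I ≤ r
        rw [if_pos (by omega : I ≤ r), if_pos (by omega : I - 1 ≤ r),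
          if_neg (by omega : ¬ r < I), if_neg (by omega : ¬ I = r + 1)]
        rw [hcast]
        field_simp
        rw [sub_add_cancel]
        field_simp
        ring
      · -- I = r + 1
        rw [if_neg (by omega : ¬ I ≤ r), if_pos (by omega : I - 1 ≤ r),
          if_pos (by omega : r < I), if_pos hir]
        rw [hcast]
        have : (I : ℂ) = (r : ℂ) + 1 := by rw [hir]; push_cast; ring
        rw [this]
        have hr0 : (r : ℂ) + 1 ≠ 0 := by
          have := Nat.cast_add_one_ne_zero (R := ℂ) r; push_cast at this ⊢; exact this
        field_simp
        ring
      · -- I ≥ r + 2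
        rw [if_neg (by omega : ¬ I ≤ r), if_neg (by omega : ¬ I - 1 ≤ r),
          if_pos (by omega : r < I), if_neg (by omega : ¬ I = r + 1)]
        rw [hcast]
        field_simp
        rw [sub_add_cancel]
        field_simp
        ring
  · by_cases hsub : I = J + 1
    · -- subdiagonal entry
      simp only [lent, uent, Bentry, cartanEntry, qval]
      rw [if_neg hd, if_pos hsub.symm]
      have hsnd : (if 2 ≤ J then
          (if I = J - 1 then (1:ℂ) else if (J - 1) + 1 = I then -(↑(J-1) : ℂ) / ((↑(J-1):ℂ) + 1) else 0)
            * (-if J - 1 ≤ r then γ ^ 2 else γ ^ 2 - ((r : ℂ) + 1)) else 0) = 0 := by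
        split_ifs with h1 h2 h3 <;> first | rfl | (exfalso; omega) | ring1
      rw [hsnd, if_neg hd, if_pos (Or.inr hsub.symm)]
      have hIr1 : ¬ (I = r + 1 ∧ J = r + 1) := by omega
      rcases le_or_gt J r with hjr | hjr
      · rw [if_pos hjr, if_neg (by omega : ¬ r < J)]
        have hJ1c : (J : ℂ) + 1 ≠ 0 := by
          have := Nat.cast_add_one_ne_zero (R := ℂ) J; push_cast at this ⊢; exact this
        by_cases hI1 : I = r + 1
        · rw [if_pos hI1, if_neg (by omega : ¬ J = r + 1)]
          field_simp
          ring
        · rw [if_neg hI1]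
          by_cases hri : r < I
          · rw [if_pos hri]; field_simp; ring
          · rw [if_neg hri]; field_simp; ring
      · have hJ1c : (J : ℂ) + 1 ≠ 0 := by
          have := Nat.cast_add_one_ne_zero (R := ℂ) J; push_cast at this ⊢; exact this
        rw [if_neg (by omega : ¬ J ≤ r), if_pos hjr, if_pos (by omega : r < I),
          if_neg (by omega : ¬ I = r + 1)]
        field_simp
        ring
    · by_cases hsup : J = I + 1
      · -- superdiagonal entry
        have h2J : 2 ≤ J := by omega
        simp only [lent, uent, Bentry, cartanEntry, qval]
        rw [if_neg hd, if_neg (by omega : ¬ J + 1 = I), if_pos h2J,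
          if_pos (by omega : I = J - 1), if_neg hd, if_pos (Or.inl hsup.symm)]
        have hJ1 : J - 1 = I := by omega
        rw [hJ1]
        rcases le_or_gt I r with hir | hir
        · rw [if_pos hir, if_neg (by omega : ¬ r < I), if_neg (by omega : ¬ I = r + 1)]
          ring
        · rw [if_neg (by omega : ¬ I ≤ r), if_pos hir, if_pos (by omega : r < J),
            if_neg (by omega : ¬ J = r + 1)]
          ring
      · -- far entries
        simp only [lent, uent, Bentry, cartanEntry]
        rw [if_neg hd, if_neg (by omega : ¬ J + 1 = I), if_neg hd,
          if_neg (by omega : ¬ (I + 1 = J ∨ J + 1 = I))]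
        split_ifs with h1 h2 h3 <;> first | ring1 | (exfalso; omega)

lemma LU_eq (n r : ℕ) (γ : ℂ) (hr1 : 1 ≤ r) :
    Lmat n * Umat n r γ = Bmatrix n r γ := by
  ext i j
  rw [Matrix.mul_apply]
  have hsplit : ∀ k : Fin n, Lmat n i k * Umat n r γ k j =
      (if k = j then lent (i.1 + 1) (j.1 + 1)
          * (qval r γ (j.1 + 1) * ((j.1 : ℂ) + 1 + 1) / ((j.1 : ℂ) + 1)) else 0)
      + (if k.1 + 1 = j.1 then lent (i.1 + 1) (k.1 + 1) * (-qval r γ (k.1 + 1)) else 0) := by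
    intro k
    by_cases h1 : k = j
    · subst h1
      rw [if_pos rfl, if_neg (by omega : ¬ k.1 + 1 = k.1)]
      simp only [Lmat, Umat, Matrix.of_apply, uent, if_pos rfl]
      push_cast
      ring
    · rw [if_neg h1]
      by_cases h2 : k.1 + 1 = j.1
      · rw [if_pos h2]
        simp only [Lmat, Umat, Matrix.of_apply, uent]
        rw [if_neg (fun h => h1 (Fin.ext (by omega))), if_pos (by omega : k.1 + 1 + 1 = j.1 + 1)]
        ring
      · rw [if_neg h2]
        simp only [Lmat, Umat, Matrix.of_apply, uent]
        rw [if_neg (fun h => h1 (Fin.ext (by omega))), if_neg (by omega : ¬ k.1 + 1 + 1 = j.1 + 1)]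
        ring
  rw [Finset.sum_congr rfl (fun k _ => hsplit k), Finset.sum_add_distrib,
    Finset.sum_ite_eq' Finset.univ j, if_pos (Finset.mem_univ j)]
  have hsnd : (∑ k : Fin n, if k.1 + 1 = j.1 then
      lent (i.1 + 1) (k.1 + 1) * (-qval r γ (k.1 + 1)) else 0)
      = (if 2 ≤ j.1 + 1 then lent (i.1 + 1) (j.1 + 1 - 1) * (-qval r γ (j.1 + 1 - 1)) else 0) := by
    rcases Nat.eq_zero_or_pos j.1 with hj0 | hjpos
    · rw [if_neg (by omega)]
      apply Finset.sum_eq_zero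
      intro k _
      rw [if_neg (by omega)]
    · have hlt : j.1 - 1 < n := by omega
      have : ∀ k : Fin n, (if k.1 + 1 = j.1 then
          lent (i.1 + 1) (k.1 + 1) * (-qval r γ (k.1 + 1)) else 0)
          = (if k = ⟨j.1 - 1, hlt⟩ then lent (i.1 + 1) (k.1 + 1) * (-qval r γ (k.1 + 1)) else 0) := by
        intro k
        apply if_congr _ rfl rfl
        rw [Fin.ext_iff]
        simp only []
        omega
      rw [Finset.sum_congr rfl (fun k _ => this k),
        Finset.sum_ite_eq' Finset.univ (⟨j.1 - 1, hlt⟩ : Fin n), if_pos (Finset.mem_univ _)]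
      rw [if_pos (by omega : 2 ≤ j.1 + 1)]
      simp only [Fin.val_mk]
      rw [show j.1 - 1 + 1 = j.1 + 1 - 1 from by omega]
  rw [hsnd]
  have := key_identity r hr1 γ (i.1 + 1) (j.1 + 1) (by omega) (by omega)
  rw [show ((j.1 + 1 : ℕ) : ℂ) = (j.1 : ℂ) + 1 by push_cast; ring] at this
  simpa [Bmatrix] using this

lemma Umat_det (n r : ℕ) (γ : ℂ) :
    (Umat n r γ).det = ∏ i : Fin n, (qval r γ (i.1 + 1) * ((i.1 : ℂ) + 1 + 1) / ((i.1 : ℂ) + 1)) := by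
  rw [Matrix.det_of_upperTriangular]
  · apply Finset.prod_congr rfl
    intro i _
    simp only [Umat, Matrix.of_apply, uent, if_pos rfl]
    push_cast
    ring
  · intro i j hij
    have h : (j : ℕ) < (i : ℕ) := hij
    simp only [Umat, Matrix.of_apply, uent]
    rw [if_neg (by omega : ¬ i.1 + 1 = j.1 + 1),
      if_neg (by omega : ¬ i.1 + 1 + 1 = j.1 + 1)]

lemma Lmat_det (n : ℕ) : (Lmat n).det = 1 := by
  rw [Matrix.det_of_lowerTriangular]
  · apply Finset.prod_eq_one
    intro i _
    simp [Lmat, lent]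
  · intro i j hij
    simp only [Lmat, Matrix.of_apply, lent, OrderDual.toDual_lt_toDual] at hij ⊢
    rw [if_neg (by intro h; omega), if_neg (by omega)]

/-- for `1 ≤ r ≤ n − 1`, the matrix `𝔅` is degenerate (`det 𝔅 = 0`)
if and only if `γ = 0` or `γ² = r + 1`. -/
theorem Bmatrix_degenerate_iff (n r : ℕ) (γ : ℂ) (hr1 : 1 ≤ r) (hrn : r + 1 ≤ n) :
    (Bmatrix n r γ).det = 0 ↔ γ = 0 ∨ γ ^ 2 = (r : ℂ) + 1 := by
  have hdet : (Bmatrix n r γ).det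
      = ∏ i : Fin n, (qval r γ (i.1 + 1) * ((i.1 : ℂ) + 1 + 1) / ((i.1 : ℂ) + 1)) := by
    rw [← LU_eq n r γ hr1, Matrix.det_mul, Lmat_det, Umat_det, one_mul]
  rw [hdet, Finset.prod_eq_zero_iff]
  constructor
  · rintro ⟨i, -, hi⟩
    have h1 : ((i.1 : ℂ) + 1 + 1) ≠ 0 := by
      rw [show ((i.1 : ℂ) + 1 + 1) = ((i.1 + 2 : ℕ) : ℂ) by push_cast; ring]
      exact Nat.cast_ne_zero.mpr (by omega)
    have h2 : ((i.1 : ℂ) + 1) ≠ 0 := by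
      have := Nat.cast_add_one_ne_zero (R := ℂ) i.1; push_cast at this ⊢; exact this
    have hq : qval r γ (i.1 + 1) = 0 := by
      by_contra hq
      exact (div_ne_zero (mul_ne_zero hq h1) h2) hi
    simp only [qval] at hq
    split_ifs at hq with h
    · left; exact pow_eq_zero_iff (by norm_num) |>.mp hq
    · right; linear_combination hq
  · intro h
    rcases h with h | h
    · refine ⟨⟨0, by omega⟩, Finset.mem_univ _, ?_⟩
      simp only [qval, if_pos (by omega : 0 + 1 ≤ r)]
      rw [h]
      ring
    · refine ⟨⟨n - 1, by omega⟩, Finset.mem_univ _, ?_⟩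
      simp only [qval, if_neg (by omega : ¬ n - 1 + 1 ≤ r)]
      rw [h]
      ring
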